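/- Let m ∈ ℕ, let F : EuclideanSpace ℝ (Fin m) → EuclideanSpace ℝ (Fin m), let φ, ψ : ℝ → ℝ, and let x₀ ∈ EuclideanSpace ℝ (Fin m), t₀ ∈ ℝ. Assume F is differentiable at x₀, φ is differentiable at t₀, and ψ is differentiable at ‖x₀‖². Define G : EuclideanSpace ℝ (Fin m) × ℝ → EuclideanSpace ℝ (Fin m) × ℝ by G (x, t) = (F x, t − φ t · ψ (‖x‖²)). Then G is differentiable at (x₀, t₀) and the determinant of its total derivative satisfies det (fderiv ℝ G (x₀, t₀)) = det (fderiv ℝ F x₀) · (1 − deriv φ t₀ · ψ (‖x₀‖²)). -/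

import Mathlib

open ContinuousLinearMap

lemma det_block_lower {E : Type*} [NormedAddCommGroup E] [NormedSpace ℝ E]
    [FiniteDimensional ℝ E] (A : E →L[ℝ] E) (f : E →L[ℝ] ℝ) (c : ℝ) :
    ((A.comp (fst ℝ E ℝ)).prod (f.comp (fst ℝ E ℝ) + c • snd ℝ E ℝ)).det = A.det * c := by
  classical
  set L := ((A.comp (fst ℝ E ℝ)).prod (f.comp (fst ℝ E ℝ) + c • snd ℝ E ℝ))
  let bE := Module.finBasis ℝ E
  let bR : Module.Basis Unit ℝ ℝ := Module.Basis.singleton Unit ℝ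
  let bb := bE.prod bR
  have hdet : L.det = LinearMap.det (L : E × ℝ →ₗ[ℝ] E × ℝ) := rfl
  rw [hdet, ← LinearMap.det_toMatrix bb]
  set M := LinearMap.toMatrix bb bb (L : E × ℝ →ₗ[ℝ] E × ℝ) with hM
  have h12 : M.toBlocks₁₂ = 0 := by
    ext i j
    simp only [Matrix.toBlocks₁₂, hM, LinearMap.toMatrix_apply, Matrix.of_apply]
    have h1 : (bb (Sum.inr j)).1 = 0 := bE.prod_apply_inr_fst bR j
    have : ((L : E × ℝ →ₗ[ℝ] E × ℝ) (bb (Sum.inr j))).1 = 0 := by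
      simp [L, h1]
    rw [Module.Basis.prod_repr_inl, this]
    simp
  have h11 : M.toBlocks₁₁ = LinearMap.toMatrix bE bE (A : E →ₗ[ℝ] E) := by
    ext i j
    simp only [Matrix.toBlocks₁₁, hM, LinearMap.toMatrix_apply, Matrix.of_apply]
    have h1 : (bb (Sum.inl j)).1 = bE j := bE.prod_apply_inl_fst bR j
    have : ((L : E × ℝ →ₗ[ℝ] E × ℝ) (bb (Sum.inl j))).1 = A (bE j) := by simp [L, h1]
    rw [Module.Basis.prod_repr_inl, this]
    simp
  have h22 : M.toBlocks₂₂ = Matrix.diagonal (fun _ => c) := by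
    ext i j
    simp only [Matrix.toBlocks₂₂, hM, LinearMap.toMatrix_apply, Matrix.of_apply]
    have h1 : (bb (Sum.inr j)).1 = 0 := bE.prod_apply_inr_fst bR j
    have h2 : (bb (Sum.inr j)).2 = bR j := bE.prod_apply_inr_snd bR j
    have : ((L : E × ℝ →ₗ[ℝ] E × ℝ) (bb (Sum.inr j))).2 = c := by
      simp [L, h1, h2, bR, Module.Basis.singleton_apply]
    rw [Module.Basis.prod_repr_inr, this]
    simp [bR, Matrix.diagonal]
  rw [← Matrix.fromBlocks_toBlocks M, h12, Matrix.det_fromBlocks_zero₁₂, h11, h22]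
  rw [LinearMap.det_toMatrix, Matrix.det_diagonal]
  simp [ContinuousLinearMap.det]

theorem det_fderiv_perturbation {m : ℕ}
    (F : EuclideanSpace ℝ (Fin m) → EuclideanSpace ℝ (Fin m))
    (φ ψ : ℝ → ℝ) (x₀ : EuclideanSpace ℝ (Fin m)) (t₀ : ℝ)
    (hF : DifferentiableAt ℝ F x₀) (hφ : DifferentiableAt ℝ φ t₀)
    (hψ : DifferentiableAt ℝ ψ (‖x₀‖ ^ 2))
    (G : EuclideanSpace ℝ (Fin m) × ℝ → EuclideanSpace ℝ (Fin m) × ℝ)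
    (hG : ∀ x t, G (x, t) = (F x, t - φ t * ψ (‖x‖ ^ 2))) :
    DifferentiableAt ℝ G (x₀, t₀) ∧
      (fderiv ℝ G (x₀, t₀)).det =
        (fderiv ℝ F x₀).det * (1 - deriv φ t₀ * ψ (‖x₀‖ ^ 2)) := by
  have hGfun : G = fun p : EuclideanSpace ℝ (Fin m) × ℝ => (F p.1, p.2 - φ p.2 * ψ (‖p.1‖ ^ 2)) := by
    funext p
    rw [← hG p.1 p.2]
  subst hGfun
  set h : EuclideanSpace ℝ (Fin m) → ℝ := fun x => ψ (‖x‖ ^ 2) with hh_def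
  have hns : DifferentiableAt ℝ (fun x : EuclideanSpace ℝ (Fin m) => ‖x‖ ^ 2) x₀ := by
    simpa using (differentiableAt_id (𝕜 := ℝ) (x := x₀)).norm_sq ℝ
  have hh : DifferentiableAt ℝ h x₀ := hψ.comp x₀ hns
  set A := fderiv ℝ F x₀ with hA
  set N := fderiv ℝ h x₀ with hN
  set c : ℝ := 1 - deriv φ t₀ * ψ (‖x₀‖ ^ 2) with hc
  set f : EuclideanSpace ℝ (Fin m) →L[ℝ] ℝ := (-(φ t₀)) • N with hf
  have h1 : HasFDerivAt (fun p : EuclideanSpace ℝ (Fin m) × ℝ => F p.1)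
      (A.comp (ContinuousLinearMap.fst ℝ (EuclideanSpace ℝ (Fin m)) ℝ)) (x₀, t₀) :=
    hF.hasFDerivAt.comp (x₀, t₀) (hasFDerivAt_fst)
  have h2 : HasFDerivAt (fun p : EuclideanSpace ℝ (Fin m) × ℝ => φ p.2)
      (deriv φ t₀ • ContinuousLinearMap.snd ℝ (EuclideanSpace ℝ (Fin m)) ℝ) (x₀, t₀) :=
    hφ.hasDerivAt.comp_hasFDerivAt (x₀, t₀) hasFDerivAt_snd
  have h3 : HasFDerivAt (fun p : EuclideanSpace ℝ (Fin m) × ℝ => h p.1)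
      (N.comp (ContinuousLinearMap.fst ℝ (EuclideanSpace ℝ (Fin m)) ℝ)) (x₀, t₀) :=
    hh.hasFDerivAt.comp (f := Prod.fst) (x₀, t₀) (hasFDerivAt_fst)
  have h4 : HasFDerivAt (fun p : EuclideanSpace ℝ (Fin m) × ℝ => p.2 - φ p.2 * h p.1)
      (ContinuousLinearMap.snd ℝ (EuclideanSpace ℝ (Fin m)) ℝ -
        (φ t₀ • N.comp (ContinuousLinearMap.fst ℝ (EuclideanSpace ℝ (Fin m)) ℝ) +
          h x₀ • (deriv φ t₀ • ContinuousLinearMap.snd ℝ (EuclideanSpace ℝ (Fin m)) ℝ))) (x₀, t₀) :=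
    hasFDerivAt_snd.sub (h2.mul h3)
  have hD : HasFDerivAt (fun p : EuclideanSpace ℝ (Fin m) × ℝ => (F p.1, p.2 - φ p.2 * ψ (‖p.1‖ ^ 2)))
      ((A.comp (ContinuousLinearMap.fst ℝ (EuclideanSpace ℝ (Fin m)) ℝ)).prod
        (f.comp (ContinuousLinearMap.fst ℝ (EuclideanSpace ℝ (Fin m)) ℝ) + c • ContinuousLinearMap.snd ℝ (EuclideanSpace ℝ (Fin m)) ℝ))
      (x₀, t₀) := by
    have heq : (ContinuousLinearMap.snd ℝ (EuclideanSpace ℝ (Fin m)) ℝ -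
        (φ t₀ • N.comp (ContinuousLinearMap.fst ℝ (EuclideanSpace ℝ (Fin m)) ℝ) +
          h x₀ • (deriv φ t₀ • ContinuousLinearMap.snd ℝ (EuclideanSpace ℝ (Fin m)) ℝ))) =
        (f.comp (ContinuousLinearMap.fst ℝ (EuclideanSpace ℝ (Fin m)) ℝ) + c • ContinuousLinearMap.snd ℝ (EuclideanSpace ℝ (Fin m)) ℝ) := by
      refine ContinuousLinearMap.ext fun p => ?_
      simp only [ContinuousLinearMap.sub_apply, ContinuousLinearMap.add_apply,
        ContinuousLinearMap.smul_apply, ContinuousLinearMap.comp_apply,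
        ContinuousLinearMap.coe_fst', ContinuousLinearMap.coe_snd', smul_eq_mul, hf, hc, hh_def]
      ring
    rw [← heq]
    exact HasFDerivAt.prodMk h1 h4
  refine ⟨hD.differentiableAt, ?_⟩
  rw [hD.fderiv, det_block_lower]
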